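/- Let σ ∈ (1/2,1], α > 3, μ₀ > 0, and define μ_k = μ₀ / ((k+α-2)·ln^σ(k+α-2)) for k ≥ 1. Then for every k ≥ 1, μ₀·μ_k·(k+α-2)·ln^{1-σ}(k+α-2) - μ₀·μ_{k+1}·(k+α-1)·ln^{1-σ}(k+α-1) ≥ (2σ-1)·(k+α-1)·μ_{k+1}². -/

import Mathlib

open Real

/-- Tangent-line inequality for the convex function `t ↦ t^(-s)` on `(0,∞)`, `0 < s ≤ 1`. -/
lemma aux_rpow (s a b : ℝ) (hs0 : 0 < s) (hs1 : s ≤ 1) (ha : 0 < a) (hab : a < b) :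
    s * (b - a) * b ^ (-s - 1) ≤ a ^ (-s) - b ^ (-s) := by
  have hb : 0 < b := ha.trans hab
  set t : ℝ := a / b with ht
  have ht0 : 0 < t := div_pos ha hb
  have ht1 : t < 1 := (div_lt_one hb).mpr hab
  have h1 : t ^ s ≤ 1 + s * (t - 1) := by
    have := rpow_one_add_le_one_add_mul_self (s := t - 1) (by linarith) hs0.le hs1
    simpa using this
  have htpos : (0 : ℝ) < t ^ s := rpow_pos_of_pos ht0 s
  have h2 : 1 + s * (1 - t) ≤ t ^ (-s) := by
    rw [Real.rpow_neg ht0.le, ← one_div, le_div_iff₀ htpos]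
    nlinarith [sq_nonneg (s * (1 - t))]
  have e1 : a ^ (-s) = t ^ (-s) * b ^ (-s) := by
    rw [← Real.mul_rpow ht0.le hb.le, div_mul_cancel₀ _ hb.ne']
  have e2 : b ^ (-s - 1) = b ^ (-s) / b := by
    rw [Real.rpow_sub hb, Real.rpow_one]
  have hbs : (0 : ℝ) < b ^ (-s) := rpow_pos_of_pos hb _
  have e3 : s * (b - a) / b = s * (1 - t) := by
    field_simp [ht]
    rw [ht, mul_sub, mul_one, mul_div_assoc', mul_div_cancel_left₀ _ hb.ne']
  rw [e1, e2]
  have : s * (b - a) * (b ^ (-s) / b) = (s * (b - a) / b) * b ^ (-s) := by ring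
  rw [this, e3]
  nlinarith [h2, hbs]

theorem stmt_4 (σ α μ₀ : ℝ) (hσ : σ ∈ Set.Ioc (1/2 : ℝ) 1) (hα : 3 < α) (hμ₀ : 0 < μ₀)
    (μ : ℕ → ℝ)
    (hμ : ∀ k : ℕ, 1 ≤ k → μ k = μ₀ / (((k : ℝ) + α - 2) * Real.log ((k : ℝ) + α - 2) ^ σ))
    (k : ℕ) (hk : 1 ≤ k) :
    μ₀ * μ k * ((k : ℝ) + α - 2) * Real.log ((k : ℝ) + α - 2) ^ (1 - σ) -
        μ₀ * μ (k + 1) * ((k : ℝ) + α - 1) * Real.log ((k : ℝ) + α - 1) ^ (1 - σ) ≥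
      (2 * σ - 1) * ((k : ℝ) + α - 1) * μ (k + 1) ^ 2 := by
  obtain ⟨hσ1, hσ2⟩ := hσ
  have hk1 : (1 : ℝ) ≤ (k : ℝ) := by exact_mod_cast hk
  set x : ℝ := (k : ℝ) + α - 2 with hxdef
  have hx : 2 < x := by simp only [hxdef]; linarith
  have hx0 : 0 < x := by linarith
  have hx1pos : 0 < x + 1 := by linarith
  have hμk : μ k = μ₀ / (x * Real.log x ^ σ) := hμ k hk
  have hμk1 : μ (k + 1) = μ₀ / ((x + 1) * Real.log (x + 1) ^ σ) := by
    have := hμ (k + 1) (by omega)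
    have hcast : ((k + 1 : ℕ) : ℝ) + α - 2 = x + 1 := by push_cast; simp only [hxdef]; ring
    rwa [hcast] at this
  have hxy : (k : ℝ) + α - 1 = x + 1 := by simp only [hxdef]; ring
  set a : ℝ := Real.log x with hadef
  set b : ℝ := Real.log (x + 1) with hbdef
  have ha : 0 < a := Real.log_pos (by linarith)
  have hab : a < b := Real.log_lt_log hx0 (by linarith)
  have hb : 0 < b := ha.trans hab
  -- log gap lower bound
  have hgap : 1 / (x + 1) ≤ b - a := by
    have h := Real.log_le_sub_one_of_pos (show 0 < x / (x + 1) by positivity)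
    rw [Real.log_div hx0.ne' hx1pos.ne'] at h
    have : x / (x + 1) - 1 = -(1 / (x + 1)) := by field_simp; ring
    rw [this] at h
    linarith
  set s : ℝ := 2 * σ - 1 with hsdef
  have hs0 : 0 < s := by simp only [hsdef]; linarith
  have hs1 : s ≤ 1 := by simp only [hsdef]; linarith
  have haσ : (0 : ℝ) < a ^ σ := rpow_pos_of_pos ha _
  have hbσ : (0 : ℝ) < b ^ σ := rpow_pos_of_pos hb _
  -- rewrite the three quantities
  have E1 : μ₀ * μ k * x * a ^ (1 - σ) = μ₀ ^ 2 * a ^ (-s) := by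
    rw [hμk]
    have : a ^ (-s) = a ^ (1 - σ) / a ^ σ := by
      rw [← Real.rpow_sub ha]; congr 1; simp only [hsdef]; ring
    rw [this]
    field_simp
  have E2 : μ₀ * μ (k + 1) * (x + 1) * b ^ (1 - σ) = μ₀ ^ 2 * b ^ (-s) := by
    rw [hμk1]
    have : b ^ (-s) = b ^ (1 - σ) / b ^ σ := by
      rw [← Real.rpow_sub hb]; congr 1; simp only [hsdef]; ring
    rw [this]
    field_simp
  have E3 : (2 * σ - 1) * (x + 1) * μ (k + 1) ^ 2 = μ₀ ^ 2 * (s * (1 / (x + 1)) * b ^ (-s - 1)) := by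
    rw [hμk1]
    have : b ^ (-s - 1) = 1 / (b ^ σ) ^ 2 := by
      rw [sq, ← Real.rpow_add hb, one_div, ← Real.rpow_neg hb.le]
      congr 1
      simp only [hsdef]
      ring
    rw [this]
    field_simp
    ring
  rw [hxy, E1, E2, E3]
  have key := aux_rpow s a b hs0 hs1 ha hab
  have hbneg : (0 : ℝ) < b ^ (-s - 1) := rpow_pos_of_pos hb _
  have step : s * (1 / (x + 1)) * b ^ (-s - 1) ≤ s * (b - a) * b ^ (-s - 1) := by
    apply mul_le_mul_of_nonneg_right _ hbneg.le
    exact mul_le_mul_of_nonneg_left hgap hs0.le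
  have hμ0sq : (0 : ℝ) ≤ μ₀ ^ 2 := sq_nonneg _
  have : s * (1 / (x + 1)) * b ^ (-s - 1) ≤ a ^ (-s) - b ^ (-s) := step.trans key
  nlinarith [mul_le_mul_of_nonneg_left this hμ0sq]
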